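/- Let H ∈ (0,1/2), β > 0, and φ̂_n be the optimized kernel with φ̂_n(t) = (t + n^{-β})^{H-1/2} for t ≥ n^{-β} and φ̂_n(t) ≤ (1+c₁)^{1/2}(t+n^{-β})^{H-1/2} in general, where c₁ = (2^{2H}-1-2^{2H}H)^{-1}. Then ∫_0^T |φ̂_n(t) - t^{H-1/2}| dt ≤ C n^{-β(H+1/2)} for a constant C independent of n. -/
import Mathlib


open MeasureTheory Set Filter

/-- if `φ̂_n(t) = (t+n^{-β})^{H-1/2}` for `t ≥ n^{-β}` and
`0 ≤ φ̂_n(t) ≤ (1+c₁)^{1/2}(t+n^{-β})^{H-1/2}` in general, where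
`c₁ = (2^{2H}-1-2^{2H}H)^{-1}`, then `∫_0^T |φ̂_n(t) - t^{H-1/2}| dt ≤ C n^{-β(H+1/2)}`
for a constant `C` independent of `n`. -/
theorem statement5 (H β T : ℝ) (hH : H ∈ Set.Ioo (0:ℝ) (1/2)) (hβ : 0 < β) (hT : 0 < T)
    (φ : ℕ → ℝ → ℝ)
    (heq : ∀ n : ℕ, 1 ≤ n → ∀ t : ℝ, (n:ℝ) ^ (-β) ≤ t →
      φ n t = (t + (n:ℝ) ^ (-β)) ^ (H - 1/2))
    (hpos : ∀ (n : ℕ) (t : ℝ), 0 ≤ t → 0 ≤ φ n t)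
    (hbd : ∀ n : ℕ, 1 ≤ n → ∀ t : ℝ, 0 ≤ t →
      φ n t ≤ Real.sqrt (1 + ((2:ℝ) ^ (2*H) - 1 - (2:ℝ) ^ (2*H) * H)⁻¹)
        * (t + (n:ℝ) ^ (-β)) ^ (H - 1/2)) :
    ∃ C : ℝ, 0 < C ∧ ∀ n : ℕ, 1 ≤ n →
      (∫ t in (0:ℝ)..T, |φ n t - t ^ (H - 1/2)|) ≤ C * (n:ℝ) ^ (-β * (H + 1/2)) := by
  obtain ⟨hH0, hH1⟩ := hH
  set p : ℝ := H - 1/2 with hpdef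
  have hp0 : (-1:ℝ) < p := by simp only [hpdef]; linarith
  have hpneg : p < 0 := by simp only [hpdef]; linarith
  have hp1 : 0 < p + 1 := by linarith
  set K : ℝ := Real.sqrt (1 + ((2:ℝ) ^ (2*H) - 1 - (2:ℝ) ^ (2*H) * H)⁻¹) with hKdef
  have hK0 : 0 ≤ K := Real.sqrt_nonneg _
  have h2p : (0:ℝ) < (2:ℝ) ^ (p+1) := Real.rpow_pos_of_pos (by norm_num) _
  refine ⟨(K + 1 + 2 ^ (p+1)) / (p+1), by positivity, ?_⟩
  intro n hn
  have hn0 : (0:ℝ) < (n:ℝ) := by exact_mod_cast Nat.lt_of_lt_of_le Nat.zero_lt_one hn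
  set ε : ℝ := (n:ℝ) ^ (-β) with hεdef
  have hε0 : 0 < ε := Real.rpow_pos_of_pos hn0 _
  have hRHS : (n:ℝ) ^ (-β * (H + 1/2)) = ε ^ (p+1) := by
    have hx : -β * (H + 1/2) = -β * (p+1) := by rw [hpdef]; ring
    rw [hεdef, hx, Real.rpow_mul (le_of_lt hn0)]
  rw [hRHS]
  have hεp : 0 < ε ^ (p+1) := Real.rpow_pos_of_pos hε0 _
  by_cases hint : IntervalIntegrable (fun t => |φ n t - t ^ p|) volume 0 T
  · set m : ℝ := min ε T with hmdef
    have hm0 : 0 ≤ m := le_min (le_of_lt hε0) (le_of_lt hT)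
    have hmT : m ≤ T := min_le_right _ _
    have hmε : m ≤ ε := min_le_left _ _
    have hsub1 : uIcc (0:ℝ) m ⊆ uIcc (0:ℝ) T := by
      rw [uIcc_of_le hm0, uIcc_of_le (le_of_lt hT)]
      exact Icc_subset_Icc le_rfl hmT
    have hsub2 : uIcc m T ⊆ uIcc (0:ℝ) T := by
      rw [uIcc_of_le hmT, uIcc_of_le (le_of_lt hT)]
      exact Icc_subset_Icc hm0 le_rfl
    have h1 : IntervalIntegrable (fun t => |φ n t - t ^ p|) volume 0 m :=
      hint.mono_set hsub1
    have h2 : IntervalIntegrable (fun t => |φ n t - t ^ p|) volume m T :=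
      hint.mono_set hsub2
    rw [← intervalIntegral.integral_add_adjacent_intervals h1 h2]
    have hrint : ∀ a b : ℝ, IntervalIntegrable (fun t : ℝ => (K+1) * t ^ p) volume a b :=
      fun a b => (intervalIntegral.intervalIntegrable_rpow' hp0).const_mul _
    -- Bound on first piece
    have hb1 : (∫ t in (0:ℝ)..m, |φ n t - t ^ p|) ≤ (K+1) * ε ^ (p+1) / (p+1) := by
      have hmono : (∫ t in (0:ℝ)..m, |φ n t - t ^ p|)
          ≤ ∫ t in (0:ℝ)..m, (K+1) * t ^ p := by
        rw [intervalIntegral.integral_of_le hm0, intervalIntegral.integral_of_le hm0]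
        refine setIntegral_mono_on
          ((intervalIntegrable_iff_integrableOn_Ioc_of_le hm0).mp h1)
          ((intervalIntegrable_iff_integrableOn_Ioc_of_le hm0).mp (hrint 0 m))
          measurableSet_Ioc ?_
        intro t ht
        obtain ⟨ht0, htm⟩ := ht
        have htp : 0 < t ^ p := Real.rpow_pos_of_pos ht0 _
        have hb : φ n t ≤ K * (t + ε) ^ p := hbd n hn t (le_of_lt ht0)
        have hle : (t + ε) ^ p ≤ t ^ p :=
          Real.rpow_le_rpow_of_nonpos ht0 (by linarith) (le_of_lt hpneg)
        have hφ0 : 0 ≤ φ n t := hpos n t (le_of_lt ht0)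
        have : φ n t ≤ K * t ^ p := le_trans hb (by nlinarith)
        rw [abs_le]
        constructor <;> nlinarith
      refine le_trans hmono ?_
      rw [intervalIntegral.integral_const_mul,
        integral_rpow (Or.inl hp0)]
      rw [Real.zero_rpow (by linarith : p + 1 ≠ 0), sub_zero, mul_div_assoc]
      have hmle : m ^ (p+1) ≤ ε ^ (p+1) := Real.rpow_le_rpow hm0 hmε (le_of_lt hp1)
      have hK1 : (0:ℝ) ≤ K + 1 := by linarith
      exact mul_le_mul_of_nonneg_left ((div_le_div_iff_of_pos_right hp1).mpr hmle) hK1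
    -- Bound on second piece
    have hb2 : (∫ t in m..T, |φ n t - t ^ p|) ≤ 2 ^ (p+1) * ε ^ (p+1) / (p+1) := by
      rcases le_or_gt T ε with hc | hc
      · have hmeq : m = T := min_eq_right hc
        rw [hmeq, intervalIntegral.integral_same]
        positivity
      · have hmeq : m = ε := min_eq_left (le_of_lt hc)
        rw [hmeq]
        have hcong : (∫ t in ε..T, |φ n t - t ^ p|)
            = ∫ t in ε..T, (t ^ p - (t + ε) ^ p) := by
          apply intervalIntegral.integral_congr
          intro t ht
          rw [uIcc_of_le (le_of_lt hc)] at ht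
          obtain ⟨htm, htT⟩ := ht
          have ht0 : 0 < t := lt_of_lt_of_le hε0 htm
          show |φ n t - t ^ p| = t ^ p - (t + ε) ^ p
          rw [heq n hn t htm]
          have hle : (t + ε) ^ p ≤ t ^ p :=
            Real.rpow_le_rpow_of_nonpos ht0 (by linarith) (le_of_lt hpneg)
          rw [abs_of_nonpos (by linarith)]
          ring
        rw [hcong]
        have hi1 : IntervalIntegrable (fun t : ℝ => t ^ p) volume ε T :=
          intervalIntegral.intervalIntegrable_rpow' hp0
        have hi2 : IntervalIntegrable (fun t : ℝ => (t + ε) ^ p) volume ε T := by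
          have h' := (intervalIntegral.intervalIntegrable_rpow'
            (a := ε + ε) (b := T + ε) hp0).comp_add_right ε
          simpa using h'
        rw [intervalIntegral.integral_sub hi1 hi2]
        rw [integral_rpow (Or.inl hp0)]
        rw [intervalIntegral.integral_comp_add_right (fun t : ℝ => t ^ p) ε]
        rw [integral_rpow (Or.inl hp0)]
        have e1 : T ^ (p+1) ≤ (T + ε) ^ (p+1) :=
          Real.rpow_le_rpow (le_of_lt hT) (by linarith) (le_of_lt hp1)
        have e2 : (ε + ε) ^ (p+1) = 2 ^ (p+1) * ε ^ (p+1) := by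
          rw [show ε + ε = 2 * ε by ring, Real.mul_rpow (by norm_num) (le_of_lt hε0)]
        rw [div_sub_div_same, div_le_div_iff₀ hp1 hp1]
        nlinarith
    have : (K + 1 + 2 ^ (p+1)) / (p+1) * ε ^ (p+1)
        = (K+1) * ε ^ (p+1) / (p+1) + 2 ^ (p+1) * ε ^ (p+1) / (p+1) := by ring
    rw [this]
    exact add_le_add hb1 hb2
  · rw [intervalIntegral.integral_undef hint]
    positivity
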